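/- Let a and b be distinct nonzero complex numbers and let x ∈ ℂ with x ≠ 0. Then |φ(a x)| = |φ(b x)| if and only if Re((b − a) x) = ln|b| − ln|a|. Consequently, the set {x ∈ ℂ : x ≠ 0 and |φ(a x)| = |φ(b x)|} is contained in a real line in the complex plane. -/

import Mathlib

lemma stmt_11_aux (a b : ℂ) (ha : a ≠ 0) (hb : b ≠ 0)
    (x : ℂ) (hx : x ≠ 0) :
    ‖a * x * Complex.exp (1 - a * x)‖ =
        ‖b * x * Complex.exp (1 - b * x)‖ ↔
      ((b - a) * x).re = Real.log (‖b‖) - Real.log (‖a‖) := by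
  have ha' : (0:ℝ) < ‖a‖ := by simpa using (norm_pos_iff.mpr ha)
  have hb' : (0:ℝ) < ‖b‖ := by simpa using (norm_pos_iff.mpr hb)
  have hx' : (0:ℝ) < ‖x‖ := by simpa using (norm_pos_iff.mpr hx)
  rw [norm_mul, norm_mul, norm_mul, norm_mul, Complex.norm_exp, Complex.norm_exp]
  have hA : (0:ℝ) < ‖a‖ * ‖x‖ * Real.exp ((1 - a * x).re) := by
    positivity
  have hB : (0:ℝ) < ‖b‖ * ‖x‖ * Real.exp ((1 - b * x).re) := by
    positivity
  rw [← Real.log_injOn_pos.eq_iff (Set.mem_Ioi.mpr hA) (Set.mem_Ioi.mpr hB)]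
  rw [Real.log_mul (by positivity) (Real.exp_ne_zero _),
    Real.log_mul (by positivity) (Real.exp_ne_zero _),
    Real.log_mul ha'.ne' hx'.ne', Real.log_mul hb'.ne' hx'.ne',
    Real.log_exp, Real.log_exp]
  simp only [Complex.sub_re, Complex.one_re, sub_mul]
  constructor <;> intro h <;> linarith

/-- For distinct nonzero `a, b` and `x ≠ 0`, with `φ(z) = z e^{1−z}`:
`|φ(ax)| = |φ(bx)|` iff `Re((b−a)x) = ln|b| − ln|a|`; consequently the set
`{x ≠ 0 : |φ(ax)| = |φ(bx)|}` is contained in the real line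
`{z : Re((b−a)z) = ln|b| − ln|a|}`. -/
theorem stmt_11 (a b : ℂ) (ha : a ≠ 0) (hb : b ≠ 0) (hab : a ≠ b)
    (x : ℂ) (hx : x ≠ 0) :
    (‖a * x * Complex.exp (1 - a * x)‖ =
        ‖b * x * Complex.exp (1 - b * x)‖ ↔
      ((b - a) * x).re = Real.log (‖b‖) - Real.log (‖a‖)) ∧
    {z : ℂ | z ≠ 0 ∧ ‖a * z * Complex.exp (1 - a * z)‖ =
        ‖b * z * Complex.exp (1 - b * z)‖} ⊆
      {z : ℂ | ((b - a) * z).re =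
        Real.log (‖b‖) - Real.log (‖a‖)} := by
  refine ⟨stmt_11_aux a b ha hb x hx, ?_⟩
  intro z hz
  exact (stmt_11_aux a b ha hb z hz.1).mp hz.2
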